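/- arXiv:1504.02667 — 3 statements merged into one kernel-verified Lean document; each statement's English description precedes it below -/
import Mathlib

section
/- For nonzero integers r₁, s₁, s₂, n₂, positive integers D, δ, and integers x, y, one has the identity (1/(Dδ)) · ∑_{n₁ mod D} ∑_{m₁ mod δ} S̃(n₁r₁, n₂s₂, m₁s₁; D, Dδ) e(−x n₁/D − y m₁/δ) = ∑_{C₁ mod D, (C₁,D)=1, r₁C₁ ≡ x (mod D)} ∑_{C₂ mod Dδ, (C₂,δ)=1, s₁·C̄₂ ≡ y (mod δ)} e(s₂ n₂ C̄₁ C₂ / D), where C̄₁ denotes the inverse of C₁ modulo D and C̄₂ the inverse of C₂ modulo δ. -/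
open scoped BigOperators

/-- e(x) = exp(2πix). -/
noncomputable def e (x : ℝ) : ℂ := Complex.exp (2 * Real.pi * Complex.I * x)

/-- The inverse of `a` modulo `n`, represented as an integer in `[0, n)`. -/
noncomputable def zinv (n : ℕ) (a : ℤ) : ℤ := (((a : ZMod n))⁻¹.val : ℤ)

/-- The GL(3) Kloosterman sum attached to the Weyl element w₄, for `D₁ ∣ D₂`:
`S̃(n₁,n₂,m₁;D₁,D₂) = ∑_{C₁ mod D₁, (C₁,D₁)=1} ∑_{C₂ mod D₂, (C₂,D₂/D₁)=1}
  e(n₂ C̄₁C₂/D₁ + m₁ C̄₂/(D₂/D₁) + n₁C₁/D₁)`. -/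
noncomputable def Stilde (n₁ n₂ m₁ : ℤ) (D₁ D₂ : ℕ) : ℂ :=
  ∑ c₁ ∈ Finset.range D₁, ∑ c₂ ∈ Finset.range D₂,
    if Nat.gcd c₁ D₁ = 1 ∧ Nat.gcd c₂ (D₂ / D₁) = 1 then
      e (((n₂ * zinv D₁ (c₁ : ℤ) * (c₂ : ℤ) : ℤ) : ℝ) / (D₁ : ℝ)
        + ((m₁ * zinv (D₂ / D₁) (c₂ : ℤ) : ℤ) : ℝ) / ((D₂ / D₁ : ℕ) : ℝ)
        + ((n₁ * (c₁ : ℤ) : ℤ) : ℝ) / (D₁ : ℝ))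
    else 0

lemma sum4_comm {M : Type*} [AddCommMonoid M] (A B C E : Finset ℕ) (f : ℕ → ℕ → ℕ → ℕ → M) :
    ∑ a ∈ A, ∑ b ∈ B, ∑ c ∈ C, ∑ d ∈ E, f a b c d
      = ∑ c ∈ C, ∑ d ∈ E, ∑ a ∈ A, ∑ b ∈ B, f a b c d :=
  calc ∑ a ∈ A, ∑ b ∈ B, ∑ c ∈ C, ∑ d ∈ E, f a b c d
      = ∑ a ∈ A, ∑ c ∈ C, ∑ b ∈ B, ∑ d ∈ E, f a b c d :=
        Finset.sum_congr rfl fun a _ => Finset.sum_comm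
    _ = ∑ c ∈ C, ∑ a ∈ A, ∑ b ∈ B, ∑ d ∈ E, f a b c d := Finset.sum_comm
    _ = ∑ c ∈ C, ∑ a ∈ A, ∑ d ∈ E, ∑ b ∈ B, f a b c d :=
        Finset.sum_congr rfl fun c _ => Finset.sum_congr rfl fun a _ => Finset.sum_comm
    _ = ∑ c ∈ C, ∑ d ∈ E, ∑ a ∈ A, ∑ b ∈ B, f a b c d :=
        Finset.sum_congr rfl fun c _ => Finset.sum_comm

lemma e_add (a b : ℝ) : e (a + b) = e a * e b := by
  simp only [e, ← Complex.exp_add]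
  congr 1
  push_cast
  ring

lemma e_int (k : ℤ) : e (k : ℝ) = 1 := by
  rw [e, show (2 * ↑Real.pi * Complex.I * ((k : ℝ) : ℂ)) = (k : ℤ) * (2 * ↑Real.pi * Complex.I) by
    push_cast; ring]
  exact Complex.exp_int_mul_two_pi_mul_I k

lemma sum_e (N : ℕ) (hN : 0 < N) (a : ℤ) :
    ∑ n ∈ Finset.range N, e (((a * (n : ℤ) : ℤ) : ℝ) / (N : ℝ)) =
      if (N : ℤ) ∣ a then (N : ℂ) else 0 := by
  have hN0 : (N : ℝ) ≠ 0 := Nat.cast_ne_zero.mpr hN.ne'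
  by_cases h : (N : ℤ) ∣ a
  · obtain ⟨k, rfl⟩ := h
    rw [if_pos ⟨k, rfl⟩]
    have hone : ∀ n ∈ Finset.range N, e ((((N : ℤ) * k * (n : ℤ) : ℤ) : ℝ) / (N : ℝ)) = 1 := by
      intro n _
      have : ((((N : ℤ) * k * (n : ℤ) : ℤ) : ℝ) / (N : ℝ)) = (((k * n : ℤ) : ℝ)) := by
        push_cast
        field_simp
      rw [this, e_int]
    rw [Finset.sum_congr rfl hone]
    simp
  · rw [if_neg h]
    have key : ∀ n : ℕ, e (((a * (n : ℤ) : ℤ) : ℝ) / (N : ℝ)) = (e ((a : ℝ) / (N : ℝ))) ^ n := by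
      intro n
      rw [e, e, ← Complex.exp_nat_mul]
      congr 1
      push_cast
      ring
    simp only [key]
    have hpow : (e ((a : ℝ) / (N : ℝ))) ^ N = 1 := by
      rw [e, ← Complex.exp_nat_mul,
        show ((N : ℂ) * (2 * ↑Real.pi * Complex.I * (((a : ℝ) / (N : ℝ) : ℝ) : ℂ)))
          = (a : ℤ) * (2 * ↑Real.pi * Complex.I) by
            push_cast
            have : (N : ℂ) ≠ 0 := Nat.cast_ne_zero.mpr hN.ne'
            field_simp]
      exact Complex.exp_int_mul_two_pi_mul_I a
    have hne : e ((a : ℝ) / (N : ℝ)) ≠ 1 := by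
      intro h1
      rw [e, Complex.exp_eq_one_iff] at h1
      obtain ⟨n, hn⟩ := h1
      have h2pi : (2 * (Real.pi : ℂ) * Complex.I) ≠ 0 := by
        simp [Real.pi_ne_zero, Complex.I_ne_zero]
      have hx : ((((a : ℝ) / (N : ℝ) : ℝ)) : ℂ) = ((n : ℝ) : ℂ) := by
        have : (2 * (Real.pi : ℂ) * Complex.I) * ((((a : ℝ) / (N : ℝ) : ℝ)) : ℂ)
            = (2 * (Real.pi : ℂ) * Complex.I) * ((n : ℝ) : ℂ) := by
          rw [show (2 * (Real.pi : ℂ) * Complex.I) * ((((a : ℝ) / (N : ℝ) : ℝ)) : ℂ)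
              = 2 * (Real.pi : ℂ) * Complex.I * ((((a : ℝ) / (N : ℝ) : ℝ)) : ℂ) by ring, hn]
          push_cast
          ring
        exact mul_left_cancel₀ h2pi this
      have hx' : (a : ℝ) / (N : ℝ) = (n : ℝ) := by exact_mod_cast hx
      have : (a : ℝ) = ((n * N : ℤ) : ℝ) := by
        push_cast
        field_simp at hx'
        linarith [hx']
      have haeq : a = n * N := by exact_mod_cast this
      exact h ⟨n, by rw [haeq]; ring⟩
    rw [geom_sum_eq hne, hpow]
    simp

theorem w4_kloosterman_fourier_transform
    (r₁ s₁ s₂ n₂ : ℤ) (hr₁ : r₁ ≠ 0) (hs₁ : s₁ ≠ 0) (hs₂ : s₂ ≠ 0) (hn₂ : n₂ ≠ 0)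
    (D δ : ℕ) (hD : 0 < D) (hδ : 0 < δ) (x y : ℤ) :
    (1 / ((D : ℂ) * (δ : ℂ))) *
        ∑ n₁ ∈ Finset.range D, ∑ m₁ ∈ Finset.range δ,
          Stilde ((n₁ : ℤ) * r₁) (n₂ * s₂) ((m₁ : ℤ) * s₁) D (D * δ) *
            e (-(((x * (n₁ : ℤ) : ℤ) : ℝ) / (D : ℝ)) - ((y * (m₁ : ℤ) : ℤ) : ℝ) / (δ : ℝ))
      = ∑ c₁ ∈ Finset.range D, ∑ c₂ ∈ Finset.range (D * δ),
          if Nat.gcd c₁ D = 1 ∧ r₁ * (c₁ : ℤ) ≡ x [ZMOD (D : ℤ)] ∧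
              Nat.gcd c₂ δ = 1 ∧ s₁ * zinv δ (c₂ : ℤ) ≡ y [ZMOD (δ : ℤ)] then
            e (((s₂ * n₂ * zinv D (c₁ : ℤ) * (c₂ : ℤ) : ℤ) : ℝ) / (D : ℝ))
          else 0 := by
  have hD0 : (D : ℂ) ≠ 0 := Nat.cast_ne_zero.mpr hD.ne'
  have hδ0 : (δ : ℂ) ≠ 0 := Nat.cast_ne_zero.mpr hδ.ne'
  have hquot : D * δ / D = δ := Nat.mul_div_cancel_left δ hD
  have hS : ∑ n₁ ∈ Finset.range D, ∑ m₁ ∈ Finset.range δ,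
      Stilde ((n₁ : ℤ) * r₁) (n₂ * s₂) ((m₁ : ℤ) * s₁) D (D * δ) *
        e (-(((x * (n₁ : ℤ) : ℤ) : ℝ) / (D : ℝ)) - ((y * (m₁ : ℤ) : ℤ) : ℝ) / (δ : ℝ))
    = ∑ c₁ ∈ Finset.range D, ∑ c₂ ∈ Finset.range (D * δ),
        if Nat.gcd c₁ D = 1 ∧ Nat.gcd c₂ δ = 1 then
          (∑ n₁ ∈ Finset.range D,
            e ((((r₁ * (c₁ : ℤ) - x) * ((n₁ : ℕ) : ℤ) : ℤ) : ℝ) / (D : ℝ))) *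
          ((∑ m₁ ∈ Finset.range δ,
            e ((((s₁ * zinv δ (c₂ : ℤ) - y) * ((m₁ : ℕ) : ℤ) : ℤ) : ℝ) / (δ : ℝ))) *
           e (((s₂ * n₂ * zinv D (c₁ : ℤ) * (c₂ : ℤ) : ℤ) : ℝ) / (D : ℝ)))
        else 0 := by
    simp only [Stilde, hquot, Finset.sum_mul]
    rw [sum4_comm]
    refine Finset.sum_congr rfl fun c₁ _ => Finset.sum_congr rfl fun c₂ _ => ?_
    by_cases hc : Nat.gcd c₁ D = 1 ∧ Nat.gcd c₂ δ = 1
    · simp only [hc, eq_self_iff_true, true_and, and_self, if_true, ite_mul, zero_mul]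
      have hterm : ∀ n₁ m₁ : ℕ,
          e (((n₂ * s₂ * zinv D (c₁ : ℤ) * (c₂ : ℤ) : ℤ) : ℝ) / (D : ℝ)
            + (((m₁ : ℤ) * s₁ * zinv δ (c₂ : ℤ) : ℤ) : ℝ) / ((δ : ℕ) : ℝ)
            + (((n₁ : ℤ) * r₁ * (c₁ : ℤ) : ℤ) : ℝ) / (D : ℝ)) *
          e (-(((x * (n₁ : ℤ) : ℤ) : ℝ) / (D : ℝ)) - ((y * (m₁ : ℤ) : ℤ) : ℝ) / (δ : ℝ))
          = e ((((r₁ * (c₁ : ℤ) - x) * ((n₁ : ℕ) : ℤ) : ℤ) : ℝ) / (D : ℝ)) *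
            (e ((((s₁ * zinv δ (c₂ : ℤ) - y) * ((m₁ : ℕ) : ℤ) : ℤ) : ℝ) / (δ : ℝ)) *
             e (((s₂ * n₂ * zinv D (c₁ : ℤ) * (c₂ : ℤ) : ℤ) : ℝ) / (D : ℝ))) := by
        intro n₁ m₁
        rw [← e_add, ← e_add, ← e_add]
        congr 1
        push_cast
        ring
      refine Finset.sum_congr rfl fun n₁ _ => ?_
      rw [Finset.mul_sum]
      exact Finset.sum_congr rfl fun m₁ _ => hterm n₁ m₁
    · simp [hc]
  rw [hS, Finset.mul_sum]
  refine Finset.sum_congr rfl fun c₁ _ => ?_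
  rw [Finset.mul_sum]
  refine Finset.sum_congr rfl fun c₂ _ => ?_
  rw [sum_e D hD (r₁ * (c₁ : ℤ) - x), sum_e δ hδ (s₁ * zinv δ (c₂ : ℤ) - y)]
  have h3 : ((D : ℤ) ∣ (r₁ * (c₁ : ℤ) - x)) ↔ r₁ * (c₁ : ℤ) ≡ x [ZMOD (D : ℤ)] := by
    rw [Int.modEq_iff_dvd, dvd_sub_comm]
  have h4 : ((δ : ℤ) ∣ (s₁ * zinv δ (c₂ : ℤ) - y)) ↔
      s₁ * zinv δ (c₂ : ℤ) ≡ y [ZMOD (δ : ℤ)] := by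
    rw [Int.modEq_iff_dvd, dvd_sub_comm]
  by_cases hg1 : Nat.gcd c₁ D = 1
  · by_cases hg2 : Nat.gcd c₂ δ = 1
    · simp only [hg1, hg2, eq_self_iff_true, true_and, if_true]
      by_cases hA : (D : ℤ) ∣ (r₁ * (c₁ : ℤ) - x)
      · by_cases hB : (δ : ℤ) ∣ (s₁ * zinv δ (c₂ : ℤ) - y)
        · rw [if_pos hA, if_pos hB, if_pos ⟨h3.mp hA, h4.mp hB⟩]
          field_simp
        · rw [if_pos hA, if_neg hB,
            if_neg (show ¬(r₁ * (c₁ : ℤ) ≡ x [ZMOD (D : ℤ)] ∧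
              s₁ * zinv δ (c₂ : ℤ) ≡ y [ZMOD (δ : ℤ)]) from fun h => hB (h4.mpr h.2))]
          ring
      · rw [if_neg hA,
          if_neg (show ¬(r₁ * (c₁ : ℤ) ≡ x [ZMOD (D : ℤ)] ∧
            s₁ * zinv δ (c₂ : ℤ) ≡ y [ZMOD (δ : ℤ)]) from fun h => hA (h3.mpr h.1))]
        ring
    · simp [hg1, hg2]
  · simp [hg1]
end

section
/- Let s₁, s₂, α be complex numbers with Re(s₁ − α/2) > 0 and Re(s₂ + α/2) > 0. Then ∫₀^∞ (1+u²)^{−s₁} (1+u^{−2})^{−s₂} u^{α−1} du = (1/2) B(s₁ − α/2, s₂ + α/2), where B is the Euler Beta function. -/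
open Complex Set MeasureTheory

lemma ofReal_inv_cpow' {c : ℝ} (hc : 0 < c) (s : ℂ) :
    ((c : ℂ))⁻¹ ^ s = (c : ℂ) ^ (-s) := by
  rw [inv_cpow _ _ (by rw [Complex.arg_ofReal_of_nonneg hc.le]; exact Real.pi_ne_zero.symm),
    cpow_neg]

lemma beta_Ioi (a b : ℂ) (ha : 0 < a.re) (hb : 0 < b.re) :
    ∫ t in Set.Ioi (0 : ℝ), (t : ℂ) ^ (a - 1) * ((1 : ℂ) + t) ^ (-(a + b))
      = Complex.betaIntegral a b := by
  have himg : (fun x : ℝ => x / (1 - x)) '' Set.Ioo 0 1 = Set.Ioi 0 := by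
    ext y
    constructor
    · rintro ⟨x, ⟨hx0, hx1⟩, rfl⟩
      exact div_pos hx0 (by linarith)
    · intro hy
      have hy' : (0:ℝ) < y := hy
      refine ⟨y / (1 + y), ⟨div_pos hy' (by positivity), ?_⟩, ?_⟩
      · rw [div_lt_one (by positivity)]; linarith
      · have h1 : (1:ℝ) + y ≠ 0 := by positivity
        field_simp
        ring
  have hderiv : ∀ x ∈ Set.Ioo (0:ℝ) 1, HasDerivWithinAt (fun x : ℝ => x / (1 - x))
      (((1 - x) ^ 2)⁻¹) (Set.Ioo 0 1) x := by
    rintro x ⟨hx0, hx1⟩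
    have h1 : (1 : ℝ) - x ≠ 0 := by linarith
    have := (hasDerivAt_id x).div ((hasDerivAt_id x).const_sub 1) h1
    exact this.hasDerivWithinAt.congr_deriv (by simp only [id]; field_simp; ring)
  have hinj : Set.InjOn (fun x : ℝ => x / (1 - x)) (Set.Ioo 0 1) := by
    rintro x ⟨hx0, hx1⟩ y ⟨hy0, hy1⟩ h
    have h1 : (1 : ℝ) - x ≠ 0 := by linarith
    have h2 : (1 : ℝ) - y ≠ 0 := by linarith
    field_simp at h
    linarith
  rw [← himg, MeasureTheory.integral_image_eq_integral_abs_deriv_smul measurableSet_Ioo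
    hderiv hinj]
  rw [Complex.betaIntegral, intervalIntegral.integral_of_le zero_le_one,
    MeasureTheory.integral_Ioc_eq_integral_Ioo]
  refine setIntegral_congr_fun measurableSet_Ioo fun x hx => ?_
  obtain ⟨hx0, hx1⟩ := hx
  have hc : (0:ℝ) < 1 - x := by linarith
  have hc0 : ((1 - x : ℝ) : ℂ) ≠ 0 := ofReal_ne_zero.2 hc.ne'
  have hC : (1:ℂ) - (x:ℂ) = ((1 - x : ℝ) : ℂ) := by push_cast; ring
  have e0 : |((1-x)^2)⁻¹| = ((1-x)^2)⁻¹ := abs_of_pos (by positivity)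
  have e0' : ((((1-x)^2)⁻¹ : ℝ) : ℂ) = ((1 - x : ℝ) : ℂ) ^ (-2 : ℂ) := by
    rw [show (-2:ℂ) = -((2:ℕ):ℂ) by norm_num, cpow_neg, cpow_natCast]
    push_cast
    ring
  have e1 : ((x / (1 - x) : ℝ) : ℂ) ^ (a - 1)
      = (x : ℂ) ^ (a - 1) * ((1 - x : ℝ) : ℂ) ^ (-(a - 1)) := by
    rw [show (x / (1-x) : ℝ) = x * (1-x)⁻¹ from div_eq_mul_inv _ _, ofReal_mul,
      mul_cpow_ofReal_nonneg hx0.le (by positivity), ofReal_inv, ofReal_inv_cpow' hc]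
  have e2 : ((1:ℂ) + ((x / (1 - x) : ℝ) : ℂ)) ^ (-(a + b)) = ((1 - x : ℝ) : ℂ) ^ (a + b) := by
    have h : (1:ℝ) + x / (1 - x) = (1 - x)⁻¹ := by
      field_simp
      ring
    rw [show (1:ℂ) + ((x / (1 - x) : ℝ) : ℂ) = (((1 - x)⁻¹ : ℝ) : ℂ) by
        rw [← h]; push_cast; ring,
      ofReal_inv, ofReal_inv_cpow' hc, neg_neg]
  simp only [real_smul]
  rw [e0, e0', e1, e2, hC]
  have hpow : ((1 - x : ℝ) : ℂ) ^ (-2:ℂ) * ((1 - x : ℝ) : ℂ) ^ (-(a-1))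
      * ((1 - x : ℝ) : ℂ) ^ (a + b) = ((1 - x : ℝ) : ℂ) ^ (b - 1) := by
    rw [← cpow_add _ _ hc0, ← cpow_add _ _ hc0]
    congr 1
    ring
  calc ((1 - x : ℝ) : ℂ) ^ (-2:ℂ) * ((x:ℂ)^(a-1) * ((1 - x : ℝ) : ℂ)^(-(a-1))
          * ((1 - x : ℝ) : ℂ)^(a+b))
      = (x:ℂ)^(a-1) * (((1 - x : ℝ) : ℂ)^(-2:ℂ) * ((1 - x : ℝ) : ℂ)^(-(a-1))
          * ((1 - x : ℝ) : ℂ)^(a+b)) := by ring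
    _ = (x:ℂ)^(a-1) * ((1 - x : ℝ) : ℂ)^(b-1) := by rw [hpow]

theorem mellin_beta_formula_1 (s₁ s₂ α : ℂ)
    (h₁ : 0 < (s₁ - α / 2).re) (h₂ : 0 < (s₂ + α / 2).re) :
    ∫ u in Set.Ioi (0 : ℝ),
        (1 + (u : ℂ) ^ 2) ^ (-s₁) * (1 + ((u : ℂ) ^ 2)⁻¹) ^ (-s₂) * (u : ℂ) ^ (α - 1)
      = (1 / 2) * (Complex.Gamma (s₁ - α / 2) * Complex.Gamma (s₂ + α / 2)
          / Complex.Gamma ((s₁ - α / 2) + (s₂ + α / 2))) := by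
  set a : ℂ := s₂ + α / 2 with ha_def
  set b : ℂ := s₁ - α / 2 with hb_def
  set f : ℝ → ℂ := fun t => (t : ℂ) ^ s₂ * ((1:ℂ) + t) ^ (-(s₁ + s₂)) with hf_def
  have step1 : (∫ u in Set.Ioi (0 : ℝ),
        (1 + (u : ℂ) ^ 2) ^ (-s₁) * (1 + ((u : ℂ) ^ 2)⁻¹) ^ (-s₂) * (u : ℂ) ^ (α - 1))
      = mellin (fun t => f (t ^ (2:ℝ))) α := by
    rw [mellin]
    refine setIntegral_congr_fun measurableSet_Ioi fun u hu => ?_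
    have hu' : (0:ℝ) < u := hu
    have hu2 : (0:ℝ) < u ^ 2 := by positivity
    have hsq : u ^ (2:ℝ) = u ^ (2:ℕ) := by
      rw [show (2:ℝ) = ((2:ℕ):ℝ) by norm_num, Real.rpow_natCast]
    have hV : (1:ℂ) + (u:ℂ)^2 = ((1 + u^2 : ℝ) : ℂ) := by push_cast; ring
    have hV0 : ((1 + u^2 : ℝ) : ℂ) ≠ 0 := ofReal_ne_zero.2 (by positivity)
    have key : ((1:ℂ) + ((u:ℂ)^2)⁻¹) ^ (-s₂)
        = ((1 + u^2 : ℝ) : ℂ) ^ (-s₂) * ((u^2 : ℝ) : ℂ) ^ s₂ := by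
      have h : (1:ℝ) + (u^2)⁻¹ = (1 + u^2) * (u^2)⁻¹ := by
        field_simp
        ring
      rw [show (1:ℂ) + ((u:ℂ)^2)⁻¹ = (((1 + u^2) * (u^2)⁻¹ : ℝ) : ℂ) by
          rw [← h]; push_cast; ring,
        ofReal_mul, mul_cpow_ofReal_nonneg (by positivity) (by positivity),
        ofReal_inv, ofReal_inv_cpow' hu2, neg_neg]
    rw [key, hV, smul_eq_mul, hf_def]
    simp only [hsq]
    rw [show (1:ℂ) + ((u^2:ℝ) : ℂ) = ((1 + u^2 : ℝ) : ℂ) by push_cast; ring,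
      show -(s₁+s₂) = -s₁ + -s₂ by ring, cpow_add _ _ hV0]
    ring
  rw [step1, mellin_comp_rpow f α 2]
  have step2 : mellin f (α / (2:ℝ)) = Complex.betaIntegral a b := by
    rw [← beta_Ioi a b h₂ h₁, mellin]
    refine setIntegral_congr_fun measurableSet_Ioi fun t ht => ?_
    have ht' : (0:ℝ) < t := ht
    have ht0 : (t:ℂ) ≠ 0 := ofReal_ne_zero.2 ht'.ne'
    rw [smul_eq_mul, hf_def]
    simp only []
    rw [← mul_assoc, ← cpow_add _ _ ht0]
    congr 2
    · push_cast; ring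
    · rw [ha_def, hb_def]; ring
  rw [step2]
  have hab : Complex.Gamma (a + b) ≠ 0 := by
    apply Complex.Gamma_ne_zero_of_re_pos
    rw [Complex.add_re]
    linarith
  have hβ : Complex.betaIntegral a b = Complex.Gamma a * Complex.Gamma b / Complex.Gamma (a+b) := by
    rw [eq_div_iff hab, mul_comm, ← Complex.Gamma_mul_Gamma_eq_betaIntegral h₂ h₁]
  rw [hβ, show Complex.Gamma a * Complex.Gamma b = Complex.Gamma b * Complex.Gamma a from
      mul_comm _ _, show a + b = b + a from add_comm _ _]
  rw [show |(2:ℝ)| = 2 from abs_of_pos two_pos]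
  rw [real_smul]
  push_cast
  ring
end

section
/- Let s₁, s₂, α be complex numbers with Re(1 − s₁ − s₂) > 0 and Re(s₁ − α/2) > 0. Then ∫₁^∞ (u²−1)^{−s₁} (1−u^{−2})^{−s₂} u^{α−1} du = (1/2) B(1 − s₁ − s₂, s₁ − α/2). -/
open Complex MeasureTheory Set

lemma mb2_image : (fun u : ℝ => (u ^ 2)⁻¹) '' Set.Ioi 1 = Set.Ioo (0:ℝ) 1 := by
  ext y
  constructor
  · rintro ⟨u, hu, rfl⟩
    have hu1 : (1:ℝ) < u := hu
    have h2 : (1:ℝ) < u ^ 2 := one_lt_pow₀ hu1 two_ne_zero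
    exact ⟨by positivity, inv_lt_one_of_one_lt₀ h2⟩
  · rintro ⟨hy0, hy1⟩
    refine ⟨Real.sqrt y⁻¹, ?_, ?_⟩
    · have h1 : (1:ℝ) < y⁻¹ := (one_lt_inv₀ hy0).mpr hy1
      have : (1:ℝ) < Real.sqrt y⁻¹ := (Real.lt_sqrt zero_le_one).mpr (by simpa using h1)
      exact this
    · simp only [Real.sq_sqrt (by positivity : (0:ℝ) ≤ y⁻¹), inv_inv]

lemma mb2_key (s₁ s₂ α : ℂ) {u : ℝ} (hu : u ∈ Set.Ioi (1:ℝ)) :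
    |-(2 * u ^ 1) / ((u ^ 2) ^ 2)| •
      ((((u ^ 2)⁻¹ : ℝ) : ℂ) ^ (s₁ - α / 2 - 1) *
        (1 - (((u ^ 2)⁻¹ : ℝ) : ℂ)) ^ (1 - s₁ - s₂ - 1)) =
    2 * (((u : ℂ) ^ 2 - 1) ^ (-s₁) * (1 - ((u : ℂ) ^ 2)⁻¹) ^ (-s₂) * (u : ℂ) ^ (α - 1)) := by
  have hu1 : (1:ℝ) < u := hu
  have hu0 : (0:ℝ) < u := lt_trans one_pos hu1
  have h2 : (1:ℝ) < u ^ 2 := one_lt_pow₀ hu1 two_ne_zero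
  have ht : (0:ℝ) < 1 - (u ^ 2)⁻¹ := by
    have := inv_lt_one_of_one_lt₀ h2; linarith
  have hX : (u : ℂ) ≠ 0 := by exact_mod_cast hu0.ne'
  have hargu : Complex.arg (u : ℂ) = 0 := arg_ofReal_of_nonneg hu0.le
  have habs : |-(2 * u ^ 1) / ((u ^ 2) ^ 2)| = 2 / u ^ 3 := by
    rw [abs_div, abs_neg, abs_of_pos (by positivity), abs_of_pos (by positivity)]
    field_simp
  rw [habs]
  have hT : (1 : ℂ) - (((u ^ 2)⁻¹ : ℝ) : ℂ) = ((1 - (u ^ 2)⁻¹ : ℝ) : ℂ) := by push_cast; ring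
  have hTne : ((1 - (u ^ 2)⁻¹ : ℝ) : ℂ) ≠ 0 := by exact_mod_cast ht.ne'
  have hsq : ∀ w : ℂ, (u : ℂ) ^ ((2:ℕ) * w) = ((u : ℂ) ^ (2:ℕ)) ^ w := fun w =>
    Complex.cpow_nat_mul' (by rw [hargu]; simpa using Real.pi_pos) (by rw [hargu]; simpa using Real.pi_pos.le) w
  have hfac : ((u : ℂ) ^ 2 - 1) ^ (-s₁)
      = ((u : ℂ) ^ 2) ^ (-s₁) * ((1 - (u ^ 2)⁻¹ : ℝ) : ℂ) ^ (-s₁) := by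
    have h1 : ((u : ℂ) ^ 2 - 1) = (((u ^ 2) * (1 - (u ^ 2)⁻¹) : ℝ) : ℂ) := by
      push_cast; field_simp
    rw [h1, Complex.ofReal_mul, mul_cpow_ofReal_nonneg (by positivity) ht.le]
    norm_cast
  have hcast : (1 : ℂ) - ((u : ℂ) ^ 2)⁻¹ = ((1 - (u ^ 2)⁻¹ : ℝ) : ℂ) := by push_cast; ring
  have hargsq : Complex.arg ((u:ℂ) ^ 2) ≠ Real.pi := by
    rw [show ((u:ℂ)^2) = (((u^2 : ℝ)):ℂ) by push_cast; ring, arg_ofReal_of_nonneg (by positivity)]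
    exact Ne.symm Real.pi_ne_zero
  have hinv : (((u ^ 2)⁻¹ : ℝ) : ℂ) ^ (s₁ - α / 2 - 1)
      = (u : ℂ) ^ ((2:ℕ) * (1 - s₁ + α / 2)) := by
    have h0 : (((u ^ 2)⁻¹ : ℝ) : ℂ) = (((u:ℂ) ^ 2))⁻¹ := by push_cast; ring
    rw [h0, Complex.inv_cpow _ _ hargsq, ← Complex.cpow_neg, hsq]
    congr 1
    ring
  rw [hfac, hcast, hT, hinv]
  rw [show ((u:ℂ)^2) ^ (-s₁) = (u:ℂ) ^ ((2:ℕ) * (-s₁)) from (hsq (-s₁)).symm]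
  rw [show (1 - s₁ - s₂ - 1 : ℂ) = -s₁ + -s₂ by ring, Complex.cpow_add _ _ hTne]
  have hsplit : (u : ℂ) ^ ((2:ℕ) * (1 - s₁ + α / 2))
      = (u : ℂ) ^ (3:ℂ) * ((u : ℂ) ^ ((2:ℕ) * (-s₁)) * (u : ℂ) ^ (α - 1)) := by
    rw [← Complex.cpow_add _ _ hX, ← Complex.cpow_add _ _ hX]
    congr 1
    push_cast
    ring
  rw [hsplit, show ((u:ℂ) ^ (3:ℂ)) = (u:ℂ) ^ (3:ℕ) from Complex.cpow_natCast _ 3]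
  rw [real_smul]
  push_cast
  have hu3 : ((u:ℂ)) ^ (3:ℕ) ≠ 0 := pow_ne_zero _ hX
  field_simp

theorem mellin_beta_formula_2 (s₁ s₂ α : ℂ)
    (h₁ : 0 < (1 - s₁ - s₂).re) (h₂ : 0 < (s₁ - α / 2).re) :
    ∫ u in Set.Ioi (1 : ℝ),
        ((u : ℂ) ^ 2 - 1) ^ (-s₁) * (1 - ((u : ℂ) ^ 2)⁻¹) ^ (-s₂) * (u : ℂ) ^ (α - 1)
      = (1 / 2) * (Complex.Gamma (1 - s₁ - s₂) * Complex.Gamma (s₁ - α / 2)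
          / Complex.Gamma ((1 - s₁ - s₂) + (s₁ - α / 2))) := by
  have hder : ∀ x ∈ Set.Ioi (1:ℝ), HasDerivWithinAt (fun u : ℝ => (u ^ 2)⁻¹)
      (-(2 * x ^ 1) / ((x ^ 2) ^ 2)) (Set.Ioi 1) x := by
    intro x hx
    have hx0 : (0:ℝ) < x := lt_trans one_pos hx
    have := ((hasDerivAt_pow 2 x).fun_inv (by positivity)).hasDerivWithinAt (s := Set.Ioi 1)
    simpa using this
  have hinj : Set.InjOn (fun u : ℝ => (u ^ 2)⁻¹) (Set.Ioi 1) := by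
    intro x hx y hy hxy
    have hx1 : (1:ℝ) < x := hx
    have hy1 : (1:ℝ) < y := hy
    have h2 : x ^ 2 = y ^ 2 := inv_injective hxy
    nlinarith
  have beta2 : Complex.betaIntegral (s₁ - α / 2) (1 - s₁ - s₂)
      = 2 * ∫ u in Set.Ioi (1 : ℝ),
          ((u : ℂ) ^ 2 - 1) ^ (-s₁) * (1 - ((u : ℂ) ^ 2)⁻¹) ^ (-s₂) * (u : ℂ) ^ (α - 1) := by
    rw [Complex.betaIntegral, intervalIntegral.integral_of_le zero_le_one,
      MeasureTheory.integral_Ioc_eq_integral_Ioo, ← mb2_image,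
      integral_image_eq_integral_abs_deriv_smul measurableSet_Ioi hder hinj]
    rw [MeasureTheory.setIntegral_congr_fun measurableSet_Ioi
      (fun u hu => mb2_key s₁ s₂ α hu)]
    exact MeasureTheory.integral_const_mul 2 _
  have hbeta := Complex.Gamma_mul_Gamma_eq_betaIntegral h₂ h₁
  have hG : Complex.Gamma ((s₁ - α / 2) + (1 - s₁ - s₂)) ≠ 0 :=
    Complex.Gamma_ne_zero_of_re_pos (by rw [Complex.add_re]; linarith)
  have hcomm : (1 - s₁ - s₂) + (s₁ - α / 2) = (s₁ - α / 2) + (1 - s₁ - s₂) := by ring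
  rw [hcomm]
  have hB : Complex.Gamma (1 - s₁ - s₂) * Complex.Gamma (s₁ - α / 2)
      / Complex.Gamma ((s₁ - α / 2) + (1 - s₁ - s₂))
      = Complex.betaIntegral (s₁ - α / 2) (1 - s₁ - s₂) := by
    rw [div_eq_iff hG]
    linear_combination hbeta
  rw [hB, beta2]
  ring
end
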